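/- Let u ≥ 1 and let ν = (ν₁,...,νₙ) and ν' = (ν'₁,...,ν'ₙ) be sequences of nonzero integers of the same length with Σᵢ|νᵢ| = Σᵢ|ν'ᵢ| = 2u, Σᵢνᵢ = Σᵢν'ᵢ = 0, and νᵢ ≡ ν'ᵢ (mod 2u) for all i. If ν ≠ ν', then n = 2 and {ν, ν'} = {(u,-u), (-u,u)}. -/

import Mathlib

private lemma sum_filter_split (p : ℤ×ℤ → Bool) (f : ℤ×ℤ → ℤ) (l : List (ℤ×ℤ)) :
    ((l.filter p).map f).sum + ((l.filter (fun x => !p x)).map f).sum = (l.map f).sum := by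
  induction l with
  | nil => simp
  | cons a l ih => by_cases h : p a <;> simp [h, ← ih] <;> ring

private lemma length_filter_split (p : ℤ×ℤ → Bool) (l : List (ℤ×ℤ)) :
    (l.filter p).length + (l.filter (fun x => !p x)).length = l.length := by
  induction l with
  | nil => simp
  | cons a l ih => by_cases h : p a <;> simp [h, ← ih] <;> ring

private lemma sum_map_ge (c : ℤ) (f : ℤ×ℤ → ℤ) (l : List (ℤ×ℤ))
    (h : ∀ x ∈ l, c ≤ f x) : c * l.length ≤ (l.map f).sum := by
  induction l with
  | nil => simp
  | cons a l ih =>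
    simp only [List.map_cons, List.sum_cons, List.length_cons]
    have h1 := h a List.mem_cons_self
    have h2 := ih (fun x hx => h x (List.mem_cons_of_mem a hx))
    push_cast
    nlinarith

/-- Two distinct sequences of nonzero integers, congruent entrywise mod 2u,
each with absolute values summing to 2u and entries summing to 0, must be
(u,-u) and (-u,u) in some order. -/
theorem congruent_zero_sum_sequences (u : ℕ) (hu : 1 ≤ u) (ν ν' : List ℤ)
    (hne : ∀ x ∈ ν, x ≠ 0) (hne' : ∀ x ∈ ν', x ≠ 0)
    (habs : (ν.map (fun x => |x|)).sum = 2 * (u : ℤ))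
    (habs' : (ν'.map (fun x => |x|)).sum = 2 * (u : ℤ))
    (hsum : ν.sum = 0) (hsum' : ν'.sum = 0)
    (hcong : List.Forall₂ (fun a b => (2 * (u : ℤ)) ∣ (a - b)) ν ν')
    (hneq : ν ≠ ν') :
    (ν = [(u : ℤ), -(u : ℤ)] ∧ ν' = [-(u : ℤ), (u : ℤ)]) ∨
      (ν = [-(u : ℤ), (u : ℤ)] ∧ ν' = [(u : ℤ), -(u : ℤ)]) := by
  classical
  set L := ν.zip ν' with hL
  have hlen : ν.length = ν'.length := hcong.length_eq
  have hfst : L.map Prod.fst = ν := List.map_fst_zip (le_of_eq hlen)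
  have hsnd : L.map Prod.snd = ν' := List.map_snd_zip (ge_of_eq hlen)
  have hdvd : ∀ p ∈ L, (2*(u:ℤ)) ∣ (p.1 - p.2) := by
    intro p hp
    exact List.forall₂_zip hcong (a := p.1) (b := p.2) hp
  have hnz : ∀ p ∈ L, p.1 ≠ 0 ∧ p.2 ≠ 0 := by
    intro p hp
    obtain ⟨h1, h2⟩ := List.of_mem_zip (l₁ := ν) (l₂ := ν') (a := p.1) (b := p.2) hp
    exact ⟨hne _ h1, hne' _ h2⟩
  -- f = |p.1| + |p.2|
  set f : ℤ×ℤ → ℤ := fun p => |p.1| + |p.2| with hf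
  have htot : (L.map f).sum = 4 * (u:ℤ) := by
    have : (L.map f).sum = ((L.map Prod.fst).map (fun x => |x|)).sum
        + ((L.map Prod.snd).map (fun x => |x|)).sum := by
      induction L with
      | nil => simp
      | cons a l ih => simp [ih]; ring
    rw [this, hfst, hsnd, habs, habs']; ring
  have hdiffsum : (L.map (fun p => p.1 - p.2)).sum = 0 := by
    have : (L.map (fun p => p.1 - p.2)).sum
        = (L.map Prod.fst).sum - (L.map Prod.snd).sum := by
      induction L with
      | nil => simp
      | cons a l ih => simp [ih]; ring
    rw [this, hfst, hsnd, hsum, hsum']; ring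
  set P : ℤ×ℤ → Bool := fun p => decide (p.1 ≠ p.2) with hP
  set D := L.filter P with hD
  set E := L.filter (fun x => !P x) with hE
  have hDmem : ∀ p ∈ D, p ∈ L ∧ p.1 ≠ p.2 := by
    intro p hp
    have := List.mem_filter.1 hp
    simpa [hP] using this
  have hEmem : ∀ p ∈ E, p ∈ L ∧ p.1 = p.2 := by
    intro p hp
    have := List.mem_filter.1 hp
    simpa [hP] using this
  -- each differing pair has f p ≥ 2u
  have hDge : ∀ p ∈ D, 2*(u:ℤ) ≤ f p := by
    intro p hp
    obtain ⟨hpL, hpne⟩ := hDmem p hp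
    have h1 : (2*(u:ℤ)) ∣ (p.1 - p.2) := hdvd p hpL
    have h2 : (0:ℤ) < |p.1 - p.2| := abs_pos.2 (sub_ne_zero.2 hpne)
    have h3 : (2*(u:ℤ)) ≤ |p.1 - p.2| := Int.le_of_dvd h2 ((dvd_abs _ _).2 h1)
    calc (2*(u:ℤ)) ≤ |p.1 - p.2| := h3
      _ ≤ |p.1| + |p.2| := abs_sub _ _
  have hEge : ∀ p ∈ E, (2:ℤ) ≤ f p := by
    intro p hp
    obtain ⟨hpL, hpe⟩ := hEmem p hp
    obtain ⟨h1, _⟩ := hnz p hpL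
    have : (1:ℤ) ≤ |p.1| := Int.one_le_abs (by omega)
    simp [hf, ← hpe]; omega
  have hDsum : 2*(u:ℤ) * D.length ≤ ((D.map f).sum) := sum_map_ge _ _ _ hDge
  have hEsum : (2:ℤ) * E.length ≤ ((E.map f).sum) := sum_map_ge _ _ _ hEge
  have hsplit : ((D.map f).sum) + ((E.map f).sum) = 4 * (u:ℤ) := by
    rw [hD, hE, sum_filter_split, htot]
  -- D is nonempty
  have hDne : D ≠ [] := by
    intro h
    apply hneq
    rw [← hfst, ← hsnd]
    apply List.map_congr_left
    intro p hp
    by_contra hc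
    have : p ∈ D := List.mem_filter.2 ⟨hp, by simp [hP, hc]⟩
    simp [h] at this
  -- D.length ≠ 1
  have hD1 : D.length ≠ 1 := by
    intro h
    obtain ⟨p, hp⟩ := List.length_eq_one_iff.1 h
    -- sum over D of (p.1 - p.2) = 0
    have hEzero : (E.map (fun p => p.1 - p.2)).sum = 0 := by
      apply List.sum_eq_zero
      intro x hx
      simp only [List.mem_map] at hx
      obtain ⟨q, hq, rfl⟩ := hx
      have := (hEmem q hq).2
      omega
    have hsplit2 : ((D.map (fun p => p.1 - p.2)).sum) + ((E.map (fun p => p.1 - p.2)).sum)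
        = 0 := by rw [hD, hE, sum_filter_split, hdiffsum]
    rw [hEzero, add_zero, hp] at hsplit2
    simp at hsplit2
    have := (hDmem p (by rw [hp]; exact List.mem_cons_self)).2
    exact this (by omega)
  have hDlen2 : 2 ≤ D.length := by
    have : D.length ≠ 0 := fun h => hDne (List.length_eq_zero_iff.1 h)
    omega
  -- then E empty and D.length = 2
  have hub : 2*(u:ℤ) * D.length + 2 * E.length ≤ 4 * (u:ℤ) := by
    rw [← hsplit]; exact add_le_add hDsum hEsum
  have huz : (1:ℤ) ≤ (u:ℤ) := by exact_mod_cast hu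
  have hDlen : D.length = 2 ∧ E.length = 0 := by
    constructor
    · by_contra h
      have h3 : (3:ℤ) ≤ D.length := by exact_mod_cast (by omega : 3 ≤ D.length)
      nlinarith [Int.ofNat_nonneg E.length]
    · by_contra h
      have h1 : (1:ℤ) ≤ E.length := by exact_mod_cast (by omega : 1 ≤ E.length)
      have h2 : (2:ℤ) ≤ D.length := by exact_mod_cast hDlen2
      nlinarith
  have hLlen : L.length = 2 := by
    rw [← length_filter_split P L, ← hD, ← hE, hDlen.1, hDlen.2]
  obtain ⟨p, q, hpq⟩ := List.length_eq_two.1 hLlen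
  -- all pairs differ
  have hall : ∀ r ∈ L, r.1 ≠ r.2 := by
    intro r hr
    by_contra hc
    have : r ∈ E := List.mem_filter.2 ⟨hr, by simp [hP, hc]⟩
    have := List.length_pos_of_mem this
    omega
  have hν : ν = [p.1, q.1] := by rw [← hfst, hpq]; simp
  have hν' : ν' = [p.2, q.2] := by rw [← hsnd, hpq]; simp
  have hs1 : p.1 + q.1 = 0 := by rw [hν] at hsum; simpa using hsum
  have hs2 : p.2 + q.2 = 0 := by rw [hν'] at hsum'; simpa using hsum'
  have ha1 : |p.1| + |q.1| = 2*(u:ℤ) := by rw [hν] at habs; simpa using habs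
  have ha2 : |p.2| + |q.2| = 2*(u:ℤ) := by rw [hν'] at habs'; simpa using habs'
  have hd1 : p.1 ≠ p.2 := hall p (by rw [hpq]; simp)
  have hp1 : p.1 = u ∨ p.1 = -(u:ℤ) := by
    rcases abs_cases p.1 with ⟨h1, _⟩ | ⟨h1, _⟩ <;>
    rcases abs_cases q.1 with ⟨h2, _⟩ | ⟨h2, _⟩ <;> omega
  have hp2 : p.2 = u ∨ p.2 = -(u:ℤ) := by
    rcases abs_cases p.2 with ⟨h1, _⟩ | ⟨h1, _⟩ <;>
    rcases abs_cases q.2 with ⟨h2, _⟩ | ⟨h2, _⟩ <;> omega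
  rcases hp1 with h1 | h1 <;> rcases hp2 with h2 | h2
  · exact absurd (h1.trans h2.symm) hd1
  · left
    have hq1 : q.1 = -(u:ℤ) := by omega
    have hq2 : q.2 = (u:ℤ) := by omega
    exact ⟨by rw [hν, h1, hq1], by rw [hν', h2, hq2]⟩
  · right
    have hq1 : q.1 = (u:ℤ) := by omega
    have hq2 : q.2 = -(u:ℤ) := by omega
    exact ⟨by rw [hν, h1, hq1], by rw [hν', h2, hq2]⟩
  · exact absurd (h1.trans h2.symm) hd1
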